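/- arXiv:1904.04157 — 3 statements merged into one kernel-verified Lean document; each statement's English description precedes it below -/
import Mathlib

section
/- Let 1 ≤ m ≤ n and let S be a matrix in the Gårding cone K_m(n). Then for every integer p with 2 ≤ p ≤ m, the strict inequality T_{p−1}(S)^{1/(p−1)} > T_p(S)^{1/p} holds. -/
open Matrix

/-- The `p`-trace of a square real matrix: the sum of all `p × p` principal minors.
    `ptrace 0 S = 1`. -/
noncomputable def ptrace {ι : Type*} [Fintype ι] (p : ℕ) (S : Matrix ι ι ℝ) : ℝ := by
  classical
  exact ∑ t ∈ Finset.univ.powersetCard p,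
    (S.submatrix (Subtype.val : {x // x ∈ t} → ι) Subtype.val).det

/-- The Gårding cone `K_m(n)`: real symmetric `n × n` matrices with `T_p > 0`
    for `p = 1, …, m`. -/
noncomputable def gardingCone (n m : ℕ) : Set (Matrix (Fin n) (Fin n) ℝ) :=
  {S | S.IsSymm ∧ ∀ p, 1 ≤ p → p ≤ m → 0 < ptrace p S}


open Finset Polynomial

section Aux

lemma ptrace_eq_sum {ι : Type*} [Fintype ι] [DecidableEq ι] (p : ℕ) (S : Matrix ι ι ℝ) :
    ptrace p S = ∑ t ∈ Finset.univ.powersetCard p,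
      (S.submatrix (Subtype.val : {x // x ∈ t} → ι) Subtype.val).det := by
  unfold ptrace
  congr!

variable {ι : Type*} [Fintype ι] [DecidableEq ι] {R : Type*} [CommRing R]

lemma det_unit_rows (s : Finset ι) (M : Matrix ι ι R) :
    (Matrix.of fun i j => if i ∈ s then M i j else if i = j then (1:R) else 0).det
      = (M.submatrix (Subtype.val : {x // x ∈ s} → ι) Subtype.val).det := by
  set N : Matrix ι ι R := Matrix.of fun i j => if i ∈ s then M i j else if i = j then (1:R) else 0
    with hN
  have hz : ∀ i, ¬ i ∈ s → ∀ j, j ∈ s → N i j = 0 := by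
    intro i hi j hj
    simp only [N, Matrix.of_apply]
    rw [if_neg hi, if_neg]
    rintro rfl; exact hi hj
  rw [Matrix.twoBlockTriangular_det N (fun i => i ∈ s) hz]
  have h2 : N.toSquareBlockProp (fun i => i ∈ s)
      = M.submatrix (Subtype.val : {x // x ∈ s} → ι) Subtype.val := by
    ext ⟨i, hi⟩ ⟨j, hj⟩
    show (if i ∈ s then M i j else if i = j then (1:R) else 0) = M i j
    rw [if_pos hi]
  have h3 : N.toSquareBlockProp (fun i => ¬ i ∈ s) = 1 := by
    ext ⟨i, hi⟩ ⟨j, hj⟩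
    show (if i ∈ s then M i j else if i = j then (1:R) else 0)
        = (1 : Matrix {a // ¬ a ∈ s} {a // ¬ a ∈ s} R) ⟨i, hi⟩ ⟨j, hj⟩
    rw [if_neg hi]
    by_cases h : i = j
    · subst h
      rw [if_pos rfl, Matrix.one_apply_eq]
    · rw [if_neg h, Matrix.one_apply_ne (by simpa [Subtype.ext_iff] using h)]
  rw [h2, h3, det_one, mul_one]
  congr!

/-- Expansion of `det (diagonal d + M)` over principal minors. -/
lemma det_diagonal_add (d : ι → R) (M : Matrix ι ι R) :
    (Matrix.diagonal d + M).det
      = ∑ t : Finset ι,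
          (∏ i ∈ tᶜ, d i) *
            (M.submatrix (Subtype.val : {x // x ∈ t} → ι) Subtype.val).det := by
  rw [add_comm]
  have hdet : (M + Matrix.diagonal d).det
      = (Matrix.detRowAlternating : (ι → R) [⋀^ι]→ₗ[R] R).toMultilinearMap
          ((fun i => M i) + fun i => Matrix.diagonal d i) := rfl
  rw [hdet, MultilinearMap.map_add_univ]
  refine Finset.sum_congr rfl fun s _ => ?_
  set N : ι → ι → R := fun i j => if i ∈ s then M i j else if i = j then (1:R) else 0 with hNdef
  have hpw : (s.piecewise (fun i => M i) (fun i => Matrix.diagonal d i))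
      = sᶜ.piecewise (fun i => d i • N i) N := by
    funext i
    by_cases hi : i ∈ s
    · rw [Finset.piecewise_eq_of_mem _ _ _ hi,
        Finset.piecewise_eq_of_notMem _ _ _ (by simpa using hi)]
      funext j; simp [N, hi]
    · rw [Finset.piecewise_eq_of_notMem _ _ _ hi,
        Finset.piecewise_eq_of_mem _ _ _ (by simpa using hi)]
      funext j
      simp only [Pi.smul_apply, N, if_neg hi, Matrix.diagonal_apply, smul_eq_mul]
      by_cases h : i = j <;> simp [h]
  show (Matrix.detRowAlternating : (ι → R) [⋀^ι]→ₗ[R] R).toMultilinearMap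
      (s.piecewise (fun i => M i) (fun i => Matrix.diagonal d i)) = _
  rw [hpw, MultilinearMap.map_piecewise_smul, smul_eq_mul]
  congr 1
  exact det_unit_rows s M

/-- coefficient extraction -/
lemma coeff_det_X_add (n : ℕ) (M : Matrix (Fin n) (Fin n) ℝ) (p : ℕ) (hp : p ≤ n) :
    ((Matrix.diagonal (fun _ => (X : ℝ[X])) + M.map C).det).coeff (n - p) = ptrace p M := by
  rw [det_diagonal_add, finset_sum_coeff]
  rw [ptrace_eq_sum]
  have key : ∀ t : Finset (Fin n),
      ((∏ i ∈ tᶜ, (X:ℝ[X])) *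
        ((M.map C).submatrix (Subtype.val : {x // x ∈ t} → Fin n) Subtype.val).det).coeff (n - p)
      = if t.card = p then
          (M.submatrix (Subtype.val : {x // x ∈ t} → Fin n) Subtype.val).det else 0 := by
    intro t
    have hsub : ((M.map C).submatrix (Subtype.val : {x // x ∈ t} → Fin n) Subtype.val).det
        = C ((M.submatrix (Subtype.val : {x // x ∈ t} → Fin n) Subtype.val).det) := by
      rw [Matrix.submatrix_map]
      exact (RingHom.map_det (C : ℝ →+* ℝ[X]) _).symm
    rw [hsub, Finset.prod_const, mul_comm, coeff_C_mul, coeff_X_pow]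
    have hcard : tᶜ.card = n - t.card := by
      rw [Finset.card_compl, Fintype.card_fin]
    have ht : t.card ≤ n := le_trans (Finset.card_le_univ t) (by simp)
    by_cases h : t.card = p
    · rw [if_pos h, if_pos (by omega), mul_one]
    · rw [if_neg h, if_neg (by omega), mul_zero]
  rw [Finset.sum_congr rfl fun t _ => key t]
  rw [Finset.powersetCard_eq_filter, Finset.powerset_univ, Finset.sum_filter]

/-- `esym` of a tuple. -/
noncomputable def esym (n p : ℕ) (lam : Fin n → ℝ) : ℝ :=
  ∑ t ∈ (Finset.univ : Finset (Fin n)).powersetCard p, ∏ i ∈ t, lam i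

lemma ptrace_diagonal (n : ℕ) (lam : Fin n → ℝ) (p : ℕ) :
    ptrace p (Matrix.diagonal lam) = esym n p lam := by
  rw [ptrace_eq_sum, esym]
  refine Finset.sum_congr rfl fun t _ => ?_
  have : (Matrix.diagonal lam).submatrix (Subtype.val : {x // x ∈ t} → Fin n) Subtype.val
      = Matrix.diagonal (fun i : {x // x ∈ t} => lam i) := by
    ext ⟨i, hi⟩ ⟨j, hj⟩
    simp only [Matrix.submatrix_apply, Matrix.diagonal_apply, Subtype.mk.injEq]
  rw [this, Matrix.det_diagonal]
  exact Finset.prod_coe_sort t lam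

lemma isHermitian_of_isSymm {n : ℕ} (S : Matrix (Fin n) (Fin n) ℝ) (hS : S.IsSymm) :
    S.IsHermitian := by
  show Sᴴ = S
  rw [Matrix.conjTranspose_eq_transpose_of_trivial]; exact hS

lemma ptrace_eq_esym (n : ℕ) (S : Matrix (Fin n) (Fin n) ℝ) (hS : S.IsSymm)
    (p : ℕ) (hp : p ≤ n) :
    ptrace p S = esym n p (Matrix.IsHermitian.eigenvalues (isHermitian_of_isSymm S hS)) := by
  have hH := isHermitian_of_isSymm S hS
  set lam := hH.eigenvalues with hlam
  set U : Matrix (Fin n) (Fin n) ℝ := (Matrix.IsHermitian.eigenvectorUnitary hH : Matrix (Fin n) (Fin n) ℝ) with hU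
  have hspec : S = U * Matrix.diagonal lam * star U := by
    have := hH.spectral_theorem
    simpa using this
  have hUU : U * star U = 1 := Matrix.mem_unitaryGroup_iff.mp (Matrix.IsHermitian.eigenvectorUnitary hH).2
  have hdiagX : Matrix.diagonal (fun _ => (X : ℝ[X])) = (X : ℝ[X]) • (1 : Matrix (Fin n) (Fin n) ℝ[X]) := by
    rw [Matrix.smul_one_eq_diagonal]
  have hmapone : (1 : Matrix (Fin n) (Fin n) ℝ).map C = 1 :=
    Matrix.map_one C (map_zero C) (map_one C)
  have hkey : (Matrix.diagonal (fun _ => (X : ℝ[X])) + S.map C).det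
      = (Matrix.diagonal (fun _ => (X : ℝ[X])) + (Matrix.diagonal lam).map C).det := by
    have h1 : Matrix.diagonal (fun _ => (X : ℝ[X])) + S.map C
        = (U.map C) * (Matrix.diagonal (fun _ => (X : ℝ[X])) + (Matrix.diagonal lam).map C)
            * ((star U).map C) := by
      rw [mul_add, add_mul, hdiagX, Matrix.mul_smul, Matrix.smul_mul, mul_one,
        ← Matrix.map_mul, ← Matrix.map_mul, ← Matrix.map_mul]
      rw [hUU, ← hspec, hmapone]
    rw [h1, Matrix.det_mul, Matrix.det_mul, mul_comm, ← mul_assoc, mul_comm (((star U).map C).det),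
      ← Matrix.det_mul, ← Matrix.map_mul, hUU, hmapone, Matrix.det_one, one_mul]
  have e1 := coeff_det_X_add n S p hp
  have e2 := coeff_det_X_add n (Matrix.diagonal lam) p hp
  rw [← e1, hkey, e2, ptrace_diagonal]

/-- Derivative of a real-rooted polynomial is real-rooted. -/
lemma splits_derivative {f : ℝ[X]} (hf : f.Splits) :
    (derivative f).Splits := by
  rcases Nat.eq_zero_or_pos f.natDegree with h0 | hpos
  · rw [Polynomial.eq_C_of_natDegree_eq_zero h0, derivative_C]
    exact Splits.zero
  · rw [splits_iff_card_roots] at hf ⊢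
    have h1 : Multiset.card f.roots ≤ Multiset.card (derivative f).roots + 1 :=
      f.card_roots_le_derivative
    have h2 : Multiset.card (derivative f).roots ≤ (derivative f).natDegree :=
      (derivative f).card_roots'
    have h3 : (derivative f).natDegree < f.natDegree :=
      natDegree_derivative_lt (by omega)
    omega

lemma splits_iterate_derivative {f : ℝ[X]} (hf : f.Splits) (k : ℕ) :
    (derivative^[k] f).Splits := by
  induction k with
  | zero => exact hf
  | succ k ih => rw [Function.iterate_succ_apply']; exact splits_derivative ih

lemma natDegree_reflect_le' {f : ℝ[X]} {N : ℕ} (h : f.natDegree ≤ N) :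
    (Polynomial.reflect N f).natDegree ≤ N := by
  rw [Polynomial.natDegree_le_iff_coeff_eq_zero]
  intro m hm
  rw [Polynomial.coeff_reflect, Polynomial.revAt_eq_self_of_lt hm]
  exact Polynomial.coeff_eq_zero_of_natDegree_lt (lt_of_le_of_lt h hm)

/-- reflect of a real-rooted polynomial is real-rooted. -/
lemma splits_reflect {f : ℝ[X]} (hf : f.Splits) (N : ℕ)
    (hdeg : f.natDegree ≤ N) :
    (Polynomial.reflect N f).Splits := by
  rcases eq_or_ne f 0 with rfl | hf0
  · rw [Polynomial.reflect_zero]; exact Splits.zero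
  have hprod := hf.eq_prod_roots
  set d := f.natDegree with hd
  have hcard : Multiset.card f.roots = d := splits_iff_card_roots.mp hf
  -- key, by induction on the multiset of roots
  have key : ∀ (s : Multiset ℝ),
      ((Multiset.map (fun a => X - C a) s).prod.reflect (Multiset.card s)).Splits := by
    intro s
    induction s using Multiset.induction with
    | empty => simpa using Splits.one
    | cons a s ih =>
        rw [Multiset.map_cons, Multiset.prod_cons, Multiset.card_cons]
        rw [show Multiset.card s + 1 = 1 + Multiset.card s by omega]
        rw [Polynomial.reflect_mul _ _ (le_of_eq (natDegree_X_sub_C a)) (le_of_eq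
          (Polynomial.natDegree_multiset_prod_X_sub_C_eq_card s))]
        refine Splits.mul ?_ ih
        exact Splits.of_natDegree_le_one
          (natDegree_reflect_le' (le_of_eq (natDegree_X_sub_C a)))
  have : f.reflect N = C f.leadingCoeff * X ^ (N - d) *
      ((Multiset.map (fun a => X - C a) f.roots).prod.reflect d) := by
    conv_lhs => rw [hprod]
    rw [show N = (N - d) + d by omega]
    rw [Polynomial.reflect_mul (F := N - d) _ _ (by simp) (by
      rw [Polynomial.natDegree_multiset_prod_X_sub_C_eq_card, hcard])]
    rw [Polynomial.reflect_C, Nat.add_sub_cancel]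
  rw [this]
  exact Splits.mul (Splits.mul (Splits.C _) (Splits.pow Splits.X _))
    (by rw [← hcard]; exact key _)

/-- real-rooted quadratic-ish polynomial has nonneg discriminant. -/
lemma disc_nonneg_of_splits {q : ℝ[X]} (hq : q.Splits)
    (hdeg : q.natDegree ≤ 2) :
    4 * q.coeff 2 * q.coeff 0 ≤ (q.coeff 1) ^ 2 := by
  rcases eq_or_ne (q.coeff 2) 0 with h2 | h2
  · have : 4 * q.coeff 2 * q.coeff 0 = 0 := by rw [h2]; ring
    rw [this]; positivity
  have hdeg2 : q.natDegree = 2 := le_antisymm hdeg (le_natDegree_of_ne_zero h2)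
  obtain ⟨x, hx⟩ := hq.exists_eval_eq_zero (by rw [degree_eq_natDegree (fun h => by simp [h] at h2), hdeg2]; exact (by norm_num))
  have hx' : q.eval x = 0 := by simpa using hx
  have heval : q.coeff 0 + q.coeff 1 * x + q.coeff 2 * x ^ 2 = 0 := by
    have := Polynomial.eval_eq_sum_range' (show q.natDegree < 3 by omega) x
    rw [hx'] at this
    rw [Finset.sum_range_succ, Finset.sum_range_succ, Finset.sum_range_one] at this
    linear_combination -this
  have key : q.coeff 1 ^ 2 - 4 * q.coeff 2 * q.coeff 0
      = (2 * q.coeff 2 * x + q.coeff 1) ^ 2 := by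
    linear_combination (-4 * q.coeff 2) * heval
  linarith [sq_nonneg (2 * q.coeff 2 * x + q.coeff 1), key]

lemma newton (k' mm : ℕ) (lam : Fin (k' + 2 + mm) → ℝ) :
    ((k' + 2) * (mm + 2) : ℝ) * esym (k' + 2 + mm) k' lam * esym (k' + 2 + mm) (k' + 2) lam
      ≤ ((k' + 1) * (mm + 1) : ℝ) * esym (k' + 2 + mm) (k' + 1) lam ^ 2 := by
  revert lam
  generalize hn : k' + 2 + mm = n
  intro lam
  set f : ℝ[X] := ∏ i : Fin n, (X + C (lam i)) with hf
  have hmono : f.Monic := monic_prod_of_monic _ _ (fun i _ => monic_X_add_C _)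
  have hfdeg : f.natDegree = n := by
    rw [hf, natDegree_prod_of_monic _ _ (fun i _ => monic_X_add_C _)]
    simp [natDegree_X_add_C]
  have hfsplits : f.Splits :=
    Splits.prod (fun i _ => Splits.of_natDegree_le_one (le_of_eq (natDegree_X_add_C _)))
  have hcoeff : ∀ j : ℕ, j ≤ n → f.coeff j = esym n (n - j) lam := by
    intro j hj
    rw [hf, Finset.prod_X_add_C_coeff _ _ (by simpa using hj), esym]
    congr 1
    simp
  set g : ℝ[X] := derivative^[mm] f with hg
  have hgsplits : g.Splits := splits_iterate_derivative hfsplits mm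
  have hgdeg : g.natDegree ≤ k' + 2 := by
    have h0 := natDegree_iterate_derivative f mm
    rw [← hg] at h0
    omega
  set h : ℝ[X] := Polynomial.reflect (k' + 2) g with hh
  have hhsplits : h.Splits := splits_reflect hgsplits _ hgdeg
  have hhdeg : h.natDegree ≤ k' + 2 := natDegree_reflect_le' hgdeg
  set q : ℝ[X] := derivative^[k'] h with hq
  have hqsplits : q.Splits := splits_iterate_derivative hhsplits k'
  have hqdeg : q.natDegree ≤ 2 := by
    have h0 := natDegree_iterate_derivative h k'
    rw [← hq] at h0
    omega
  have disc := disc_nonneg_of_splits hqsplits hqdeg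
  -- coefficients of q
  have hcg : ∀ j : ℕ, j ≤ 2 → g.coeff j = ((j + mm).descFactorial mm : ℝ) * esym n (k' + 2 - j) lam := by
    intro j hj
    rw [hg, coeff_iterate_derivative, nsmul_eq_mul, hcoeff (j + mm) (by omega)]
    congr 2
    omega
  have hch : ∀ j : ℕ, j ≤ k' + 2 → h.coeff j = g.coeff (k' + 2 - j) := by
    intro j hj
    rw [hh, coeff_reflect, revAt_le hj]
  have hcq : ∀ j : ℕ, j ≤ 2 → q.coeff j
      = ((j + k').descFactorial k' : ℝ) * g.coeff (2 - j) := by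
    intro j hj
    rw [hq, coeff_iterate_derivative, nsmul_eq_mul, hch (j + k') (by omega)]
    congr 2
    omega
  have e2 : q.coeff 2 = ((2 + k').descFactorial k' : ℝ) * ((mm.descFactorial mm : ℝ) * esym n (k' + 2) lam) := by
    rw [hcq 2 le_rfl]
    congr 1
    have := hcg 0 (by omega)
    simpa using this
  have e1 : q.coeff 1 = ((1 + k').descFactorial k' : ℝ) * (((1 + mm).descFactorial mm : ℝ) * esym n (k' + 1) lam) := by
    rw [hcq 1 (by omega)]
    congr 1
    have := hcg 1 (by omega)
    simpa using this
  have e0 : q.coeff 0 = ((k'.descFactorial k' : ℝ)) * (((2 + mm).descFactorial mm : ℝ) * esym n k' lam) := by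
    rw [hcq 0 (by omega)]
    congr 1
    · norm_num
    have := hcg 2 le_rfl
    simpa using this
  rw [e2, e1, e0] at disc
  -- arithmetic over ℕ then ℝ
  set K : ℕ := (k' + 1) * (mm + 1) * (Nat.factorial k') ^ 2 * (Nat.factorial mm) ^ 2 with hK
  have d1 : 2 * (2 + k').descFactorial k' = (2 + k').factorial := by
    have h0 := Nat.factorial_mul_descFactorial (show k' ≤ 2 + k' by omega)
    rw [show 2 + k' - k' = 2 by omega] at h0
    rw [show (2 : ℕ).factorial = 2 from rfl] at h0
    exact h0
  have d2 : 2 * (2 + mm).descFactorial mm = (2 + mm).factorial := by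
    have h0 := Nat.factorial_mul_descFactorial (show mm ≤ 2 + mm by omega)
    rw [show 2 + mm - mm = 2 by omega] at h0
    rw [show (2 : ℕ).factorial = 2 from rfl] at h0
    exact h0
  have d3 : (1 + k').descFactorial k' = (1 + k').factorial := by
    have h0 := Nat.factorial_mul_descFactorial (show k' ≤ 1 + k' by omega)
    rw [show 1 + k' - k' = 1 by omega] at h0
    rw [show (1 : ℕ).factorial = 1 from rfl] at h0
    rw [one_mul] at h0
    exact h0
  have d4 : (1 + mm).descFactorial mm = (1 + mm).factorial := by
    have h0 := Nat.factorial_mul_descFactorial (show mm ≤ 1 + mm by omega)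
    rw [show 1 + mm - mm = 1 by omega] at h0
    rw [show (1 : ℕ).factorial = 1 from rfl] at h0
    rw [one_mul] at h0
    exact h0
  have n1 : 4 * ((2 + k').descFactorial k' * mm.descFactorial mm)
      * (k'.descFactorial k' * (2 + mm).descFactorial mm) = K * ((k' + 2) * (mm + 2)) := by
    have expand : 4 * ((2 + k').descFactorial k' * mm.descFactorial mm)
        * (k'.descFactorial k' * (2 + mm).descFactorial mm)
        = (2 * (2 + k').descFactorial k') * (2 * (2 + mm).descFactorial mm)
            * mm.descFactorial mm * k'.descFactorial k' := by ring
    rw [expand, d1, d2, Nat.descFactorial_self, Nat.descFactorial_self, hK,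
      show 2 + k' = k' + 1 + 1 by omega, show 2 + mm = mm + 1 + 1 by omega,
      Nat.factorial_succ (k' + 1), Nat.factorial_succ k',
      Nat.factorial_succ (mm + 1), Nat.factorial_succ mm]
    ring
  have n2 : ((1 + k').descFactorial k' * (1 + mm).descFactorial mm) ^ 2
      = K * ((k' + 1) * (mm + 1)) := by
    rw [d3, d4, hK, show 1 + k' = k' + 1 by omega, show 1 + mm = mm + 1 by omega,
      Nat.factorial_succ k', Nat.factorial_succ mm]
    ring
  have hKpos : (0 : ℝ) < (K : ℝ) := by
    have : 0 < K := by
      rw [hK]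
      positivity
    exact_mod_cast this
  -- cast the two identities to ℝ
  have c1 : (4 : ℝ) * (((2 + k').descFactorial k' : ℝ) * (mm.descFactorial mm : ℝ))
      * ((k'.descFactorial k' : ℝ) * ((2 + mm).descFactorial mm : ℝ))
      = (K : ℝ) * (((k' : ℝ) + 2) * ((mm : ℝ) + 2)) := by
    exact_mod_cast congrArg (Nat.cast : ℕ → ℝ) n1
  have c2 : (((1 + k').descFactorial k' : ℝ) * ((1 + mm).descFactorial mm : ℝ)) ^ 2
      = (K : ℝ) * (((k' : ℝ) + 1) * ((mm : ℝ) + 1)) := by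
    exact_mod_cast congrArg (Nat.cast : ℕ → ℝ) n2
  apply le_of_mul_le_mul_left _ hKpos
  set Em : ℝ := esym n k' lam
  set E0 : ℝ := esym n (k' + 1) lam
  set Ep : ℝ := esym n (k' + 2) lam
  have lhs_eq : (K : ℝ) * (((k' : ℝ) + 2) * ((mm : ℝ) + 2) * Em * Ep)
      = 4 * (((2 + k').descFactorial k' : ℝ) * ((mm.descFactorial mm : ℝ) * Ep))
          * ((k'.descFactorial k' : ℝ) * (((2 + mm).descFactorial mm : ℝ) * Em)) := by
    linear_combination (Em * Ep) * c1.symm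
  have rhs_eq : (K : ℝ) * (((k' : ℝ) + 1) * ((mm : ℝ) + 1) * E0 ^ 2)
      = ((((1 + k').descFactorial k' : ℝ)) * (((1 + mm).descFactorial mm : ℝ) * E0)) ^ 2 := by
    linear_combination (E0 ^ 2) * c2.symm
  calc (K : ℝ) * (((k' : ℝ) + 2) * ((mm : ℝ) + 2) * Em * Ep)
      = 4 * (((2 + k').descFactorial k' : ℝ) * ((mm.descFactorial mm : ℝ) * Ep))
          * ((k'.descFactorial k' : ℝ) * (((2 + mm).descFactorial mm : ℝ) * Em)) := lhs_eq
    _ ≤ ((((1 + k').descFactorial k' : ℝ)) * (((1 + mm).descFactorial mm : ℝ) * E0)) ^ 2 := by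
        nlinarith [disc]
    _ = (K : ℝ) * (((k' : ℝ) + 1) * ((mm : ℝ) + 1) * E0 ^ 2) := rhs_eq.symm

/-- helper: `j^k < (k+1)^k * C(j+k, k)` for `k ≥ 1`. -/
lemma pow_lt_choose (k : ℕ) (hk : 1 ≤ k) : ∀ j : ℕ, j ^ k < (k + 1) ^ k * (j + k).choose k := by
  induction k with
  | zero => omega
  | succ k ih =>
    intro j
    rcases Nat.eq_zero_or_pos k with rfl | hk1
    · -- k = 1 case
      simp [Nat.choose_one_right]
      omega
    rcases Nat.eq_zero_or_pos j with rfl | hj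
    · have h0 : 0 < (k + 2) ^ (k + 1) * (0 + (k+1)).choose (k+1) :=
        Nat.mul_pos (Nat.pow_pos (by omega)) (Nat.choose_pos (by omega))
      simpa [Nat.zero_pow] using h0
    have IH := ih hk1 j
    have hcancel : (k + 1) * (j ^ (k+1)) < (k + 1) * ((k + 2) ^ (k + 1) * (j + (k+1)).choose (k+1)) := by
      calc (k + 1) * (j ^ (k+1)) = j ^ k * (j * (k + 1)) := by ring
        _ < ((k + 1) ^ k * (j + k).choose k) * (j * (k + 1)) := by
            exact Nat.mul_lt_mul_of_lt_of_le IH (le_refl _) (by positivity)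
        _ = (j * (k + 1) ^ (k + 1)) * (j + k).choose k := by ring
        _ ≤ ((j + 1) * (k + 2) ^ (k + 1)) * (j + k + 1).choose k := by
            refine Nat.mul_le_mul (Nat.mul_le_mul (by omega) (Nat.pow_le_pow_left (by omega) _))
              (Nat.choose_le_choose _ (by omega))
        _ = (k + 2) ^ (k + 1) * ((j + k + 1).choose k * (j + 1)) := by ring
        _ = (k + 2) ^ (k + 1) * ((j + k + 1).choose (k + 1) * (k + 1)) := by
            rw [Nat.choose_succ_right_eq (j + k + 1) k, show j + k + 1 - k = j + 1 by omega]
        _ = (k + 1) * ((k + 2) ^ (k + 1) * (j + (k + 1)).choose (k + 1)) := by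
            rw [show j + k + 1 = j + (k+1) by omega]; ring
    exact Nat.lt_of_mul_lt_mul_left hcancel

/-- `C(n,k+1)^k < C(n,k)^(k+1)` for `1 ≤ k`, `k+1 ≤ n`. -/
lemma choose_pow_strict (n k : ℕ) (hk : 1 ≤ k) (hn : k + 1 ≤ n) :
    n.choose (k + 1) ^ k < n.choose k ^ (k + 1) := by
  obtain ⟨j, rfl⟩ : ∃ j, n = j + k := ⟨n - k, by omega⟩
  have key := pow_lt_choose k hk j
  have hpos : 0 < (j + k).choose k := Nat.choose_pos (by omega)
  have hcancel : (j + k).choose (k + 1) ^ k * (k + 1) ^ k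
      < (j + k).choose k ^ (k + 1) * (k + 1) ^ k := by
    calc (j + k).choose (k + 1) ^ k * (k + 1) ^ k
        = ((j + k).choose (k + 1) * (k + 1)) ^ k := by rw [Nat.mul_pow]
      _ = ((j + k).choose k * j) ^ k := by
          rw [Nat.choose_succ_right_eq (j + k) k, show j + k - k = j by omega]
      _ = (j + k).choose k ^ k * j ^ k := by rw [Nat.mul_pow]
      _ < (j + k).choose k ^ k * ((k + 1) ^ k * (j + k).choose k) :=
          Nat.mul_lt_mul_of_le_of_lt (le_refl _) key (Nat.pow_pos hpos)
      _ = (j + k).choose k ^ (k + 1) * (k + 1) ^ k := by ring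
  exact Nat.lt_of_mul_lt_mul_right hcancel

/-- Newton's inequality (unnormalized), general form. -/
lemma newton' (n k : ℕ) (h : k + 2 ≤ n) (lam : Fin n → ℝ) :
    (((k : ℝ) + 2) * ((n : ℝ) - (k : ℝ))) * (esym n k lam * esym n (k + 2) lam)
      ≤ (((k : ℝ) + 1) * ((n : ℝ) - (k : ℝ) - 1)) * esym n (k + 1) lam ^ 2 := by
  obtain ⟨mm, rfl⟩ : ∃ mm, n = k + 2 + mm := ⟨n - k - 2, by omega⟩
  have := newton k mm lam
  push_cast at this ⊢
  nlinarith [this]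

lemma esym_zero (n : ℕ) (lam : Fin n → ℝ) : esym n 0 lam = 1 := by
  simp [esym]

/-- abstract normalized-Newton step. -/
lemma norm_step (a b c A B D u v : ℝ) (hAB : 0 ≤ A * B) (hu : 0 < u)
    (i1 : B * u = A * v) (i2 : D * (u + 1) = B * (v - 1))
    (hnewton : ((u + 1) * v) * (a * c) ≤ (u * (v - 1)) * b ^ 2) :
    B ^ 2 * (a * c) ≤ A * D * b ^ 2 := by
  have step := mul_le_mul_of_nonneg_left hnewton hAB
  have lhs_eq : B ^ 2 * (a * c) * (u * (u + 1)) = A * B * (((u + 1) * v) * (a * c)) := by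
    linear_combination (B * (u + 1) * a * c) * i1
  have rhs_eq : A * D * b ^ 2 * (u * (u + 1)) = A * B * ((u * (v - 1)) * b ^ 2) := by
    linear_combination (A * u * b ^ 2) * i2
  have hpos : (0 : ℝ) < u * (u + 1) := by nlinarith
  have final : B ^ 2 * (a * c) * (u * (u + 1)) ≤ A * D * b ^ 2 * (u * (u + 1)) := by
    rw [lhs_eq, rhs_eq]; exact step
  exact le_of_mul_le_mul_right final hpos

/-- abstract Maclaurin chain step. -/
lemma chain_step (a b c A B D : ℝ) (k : ℕ) (ha : 0 < a) (hb : 0 < b) (hc : 0 < c)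
    (hA : 0 < A) (hB : 0 < B) (hD : 0 < D)
    (nn : B ^ 2 * (a * c) ≤ A * D * b ^ 2)
    (IH : b ^ k * A ^ (k + 1) ≤ a ^ (k + 1) * B ^ k) :
    c ^ (k + 1) * B ^ (k + 2) ≤ b ^ (k + 1 + 1) * D ^ (k + 1) := by
  have step1 : B ^ (2*k+2) * a ^ (k+1) * c ^ (k+1)
      ≤ A ^ (k+1) * D ^ (k+1) * b ^ (2*k+2) := by
    have h1 := pow_le_pow_left₀ (by positivity) nn (k+1)
    calc B ^ (2*k+2) * a ^ (k+1) * c ^ (k+1) = (B ^ 2 * (a * c)) ^ (k+1) := by ring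
      _ ≤ (A * D * b ^ 2) ^ (k+1) := h1
      _ = A ^ (k+1) * D ^ (k+1) * b ^ (2*k+2) := by ring
  have step2 : (b ^ k * A ^ (k+1)) * (c ^ (k+1) * B ^ (k+2))
      ≤ (b ^ k * A ^ (k+1)) * (b ^ (k+1+1) * D ^ (k+1)) := by
    calc (b ^ k * A ^ (k+1)) * (c ^ (k+1) * B ^ (k+2))
        ≤ (a ^ (k+1) * B ^ k) * (c ^ (k+1) * B ^ (k+2)) :=
          mul_le_mul_of_nonneg_right IH (by positivity)
      _ = B ^ (2*k+2) * a ^ (k+1) * c ^ (k+1) := by ring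
      _ ≤ A ^ (k+1) * D ^ (k+1) * b ^ (2*k+2) := step1
      _ = (b ^ k * A ^ (k+1)) * (b ^ (k+1+1) * D ^ (k+1)) := by ring
  exact le_of_mul_le_mul_left step2 (by positivity)

/-- normalized Newton: `C(n,k+1)^2 E_k E_{k+2} ≤ C(n,k) C(n,k+2) E_{k+1}^2`. -/
lemma newton_norm (n k : ℕ) (h : k + 2 ≤ n) (lam : Fin n → ℝ) :
    (n.choose (k+1) : ℝ) ^ 2 * (esym n k lam * esym n (k + 2) lam)
      ≤ (n.choose k : ℝ) * (n.choose (k+2) : ℝ) * esym n (k + 1) lam ^ 2 := by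
  have i1 : (n.choose (k+1) : ℝ) * ((k : ℝ) + 1) = (n.choose k : ℝ) * ((n : ℝ) - (k : ℝ)) := by
    have h0 := Nat.choose_succ_right_eq n k
    have h1 : ((n.choose (k+1) * (k+1) : ℕ) : ℝ) = ((n.choose k * (n - k) : ℕ) : ℝ) := by
      rw [h0]
    push_cast [Nat.cast_sub (show k ≤ n by omega)] at h1
    linarith [h1]
  have i2 : (n.choose (k+2) : ℝ) * (((k : ℝ) + 1) + 1)
      = (n.choose (k+1) : ℝ) * (((n : ℝ) - (k : ℝ)) - 1) := by
    have h0 := Nat.choose_succ_right_eq n (k + 1)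
    have h1 : ((n.choose (k+2) * (k+2) : ℕ) : ℝ) = ((n.choose (k+1) * (n - (k+1)) : ℕ) : ℝ) := by
      rw [show k + 2 = k + 1 + 1 from rfl, h0]
    push_cast [Nat.cast_sub (show k + 1 ≤ n by omega)] at h1
    linarith [h1]
  refine norm_step _ _ _ _ _ _ ((k : ℝ) + 1) ((n : ℝ) - (k : ℝ)) (by positivity)
    (by positivity) i1 i2 ?_
  have := newton' n k h lam
  calc (((k : ℝ) + 1) + 1) * ((n : ℝ) - (k : ℝ)) * (esym n k lam * esym n (k + 2) lam)
      = (((k : ℝ) + 2) * ((n : ℝ) - (k : ℝ))) * (esym n k lam * esym n (k + 2) lam) := by ring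
    _ ≤ (((k : ℝ) + 1) * ((n : ℝ) - (k : ℝ) - 1)) * esym n (k + 1) lam ^ 2 := this
    _ = ((k : ℝ) + 1) * (((n : ℝ) - (k : ℝ)) - 1) * esym n (k + 1) lam ^ 2 := by ring

/-- Maclaurin chain. -/
lemma macl_chain (n m : ℕ) (hmn : m ≤ n) (lam : Fin n → ℝ)
    (hpos : ∀ q, 1 ≤ q → q ≤ m → 0 < esym n q lam) :
    ∀ k, k + 1 ≤ m →
      esym n (k+1) lam ^ k * ((n.choose k : ℝ)) ^ (k+1)
        ≤ esym n k lam ^ (k+1) * ((n.choose (k+1) : ℝ)) ^ k := by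
  intro k
  induction k with
  | zero => intro _; simp [esym_zero]
  | succ k ih =>
    intro hk2
    have IH := ih (by omega)
    have nn := newton_norm n k (by omega) lam
    have ha : 0 < esym n k lam := by
      rcases Nat.eq_zero_or_pos k with rfl | hk
      · rw [esym_zero]; norm_num
      · exact hpos k hk (by omega)
    have hb : 0 < esym n (k+1) lam := hpos (k+1) (by omega) (by omega)
    have hc : 0 < esym n (k+2) lam := hpos (k+2) (by omega) (by omega)
    have hA : (0:ℝ) < (n.choose k : ℝ) := by
      exact_mod_cast Nat.choose_pos (show k ≤ n by omega)
    have hB : (0:ℝ) < (n.choose (k+1) : ℝ) := by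
      exact_mod_cast Nat.choose_pos (show k + 1 ≤ n by omega)
    have hD : (0:ℝ) < (n.choose (k+2) : ℝ) := by
      exact_mod_cast Nat.choose_pos (show k + 2 ≤ n by omega)
    exact chain_step _ _ _ _ _ _ k ha hb hc hA hB hD nn IH

/-- strict Maclaurin, power form. -/
lemma macl_strict (n m : ℕ) (hmn : m ≤ n) (lam : Fin n → ℝ)
    (hpos : ∀ q, 1 ≤ q → q ≤ m → 0 < esym n q lam)
    (k : ℕ) (hk : k + 2 ≤ m) :
    esym n (k+2) lam ^ (k+1) < esym n (k+1) lam ^ (k+2) := by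
  have chain := macl_chain n m hmn lam hpos (k+1) (by omega)
  have hb : 0 < esym n (k+1) lam := hpos (k+1) (by omega) (by omega)
  have hB : (0:ℝ) < (n.choose (k+1) : ℝ) ^ (k+2) := by
    have : 0 < n.choose (k+1) := Nat.choose_pos (by omega)
    positivity
  have hbinom : (n.choose (k+2) : ℝ) ^ (k+1) < (n.choose (k+1) : ℝ) ^ (k+2) := by
    exact_mod_cast choose_pow_strict n (k+1) (by omega) (by omega)
  have key : esym n (k+2) lam ^ (k+1) * ((n.choose (k+1) : ℝ)) ^ (k+2)
      < esym n (k+1) lam ^ (k+2) * ((n.choose (k+1) : ℝ)) ^ (k+2) := by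
    calc esym n (k+2) lam ^ (k+1) * ((n.choose (k+1) : ℝ)) ^ (k+2)
        ≤ esym n (k+1) lam ^ (k+2) * ((n.choose (k+2) : ℝ)) ^ (k+1) := chain
      _ < esym n (k+1) lam ^ (k+2) * ((n.choose (k+1) : ℝ)) ^ (k+2) :=
          mul_lt_mul_of_pos_left hbinom (by positivity)
  exact lt_of_mul_lt_mul_right key (le_of_lt hB)

end Aux

/-- For `S ∈ K_m(n)` and `2 ≤ p ≤ m`, the strict Maclaurin-type inequality
`T_{p-1}(S)^(1/(p-1)) > T_p(S)^(1/p)` holds. -/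
theorem maclaurin_strict_on_gardingCone (n m : ℕ) (h1 : 1 ≤ m) (h2 : m ≤ n)
    (S : Matrix (Fin n) (Fin n) ℝ) (hS : S ∈ gardingCone n m)
    (p : ℕ) (hp : 2 ≤ p) (hpm : p ≤ m) :
    (ptrace p S) ^ ((1 : ℝ) / p) < (ptrace (p - 1) S) ^ ((1 : ℝ) / (p - 1 : ℕ)) := by
  obtain ⟨hsymm, hpos⟩ := hS
  set lam := Matrix.IsHermitian.eigenvalues (isHermitian_of_isSymm S hsymm) with hlam
  have hE : ∀ q, q ≤ n → ptrace q S = esym n q lam := fun q hq =>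
    ptrace_eq_esym n S hsymm q hq
  have hEpos : ∀ q, 1 ≤ q → q ≤ m → 0 < esym n q lam := fun q hq1 hq2 => by
    rw [← hE q (le_trans hq2 h2)]; exact hpos q hq1 hq2
  obtain ⟨k, rfl⟩ : ∃ k, p = k + 2 := ⟨p - 2, by omega⟩
  have hstrict := macl_strict n m h2 lam hEpos k (by omega)
  rw [show k + 2 - 1 = k + 1 by omega]
  rw [hE (k+2) (by omega), hE (k+1) (by omega)]
  have hx : 0 < esym n (k+2) lam := hEpos (k+2) (by omega) (by omega)
  have hy : 0 < esym n (k+1) lam := hEpos (k+1) (by omega) (by omega)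
  have hz : (0:ℝ) < 1 / (((k:ℝ)+1) * ((k:ℝ)+2)) := by positivity
  have e1 : (esym n (k+2) lam) ^ ((1:ℝ) / ((k+2 : ℕ) : ℝ))
      = (esym n (k+2) lam ^ (k+1 : ℕ)) ^ (1 / (((k:ℝ)+1) * ((k:ℝ)+2))) := by
    rw [← Real.rpow_natCast (esym n (k+2) lam) (k+1), ← Real.rpow_mul hx.le]
    congr 1
    push_cast
    field_simp
  have e2 : (esym n (k+1) lam) ^ ((1:ℝ) / ((k+1 : ℕ) : ℝ))
      = (esym n (k+1) lam ^ (k+2 : ℕ)) ^ (1 / (((k:ℝ)+1) * ((k:ℝ)+2))) := by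
    rw [← Real.rpow_natCast (esym n (k+1) lam) (k+2), ← Real.rpow_mul hy.le]
    congr 1
    push_cast
    field_simp
  rw [e1, e2]
  exact Real.rpow_lt_rpow (by positivity) hstrict hz
end

section
/- For every 1 ≤ m ≤ n, every real symmetric n×n matrix S, and every vector ξ ∈ ℝⁿ, the identity T_m(S + ξ ξᵀ) = T_m(S) + Σ_{i,j} T_m^{ij}(S) ξ_i ξ_j holds, where ξ ξᵀ is the rank-one outer product matrix and T_m^{ij}(S) = ∂T_m(S)/∂s_{ij} is the partial derivative of T_m with respect to the (i,j)-th matrix entry. -/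
open Matrix Polynomial

/-- Matrix determinant lemma for invertible A. -/
lemma det_add_vecMulVec_of_isUnit {κ : Type*} [Fintype κ] [DecidableEq κ]
    (A : Matrix κ κ ℝ) (hA : IsUnit A.det) (u v : κ → ℝ) :
    (A + vecMulVec u v).det = A.det + v ⬝ᵥ A.adjugate *ᵥ u := by
  rw [vecMulVec_eq Unit, Matrix.det_add_replicateCol_mul_replicateRow hA]
  have h1 : (1 + replicateRow Unit v * A⁻¹ * replicateCol Unit u).det = 1 + v ⬝ᵥ A⁻¹ *ᵥ u := by
    rw [det_unique]
    simp [Matrix.mul_apply, Matrix.one_apply, dotProduct, mulVec, Finset.mul_sum,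
      Finset.sum_mul, mul_assoc]
    exact Finset.sum_comm
  rw [h1, mul_add, mul_one, Matrix.inv_def, smul_mulVec, dotProduct_smul,
    smul_eq_mul, ← mul_assoc, Ring.mul_inverse_cancel _ hA, one_mul]

lemma det_smul_one_add {κ : Type*} [Fintype κ] [DecidableEq κ]
    (A : Matrix κ κ ℝ) (x : ℝ) :
    (x • (1 : Matrix κ κ ℝ) + A).det = ((-A).charpoly).eval x := by
  rw [Matrix.charpoly, eval_det, matPolyEquiv_charmatrix]
  rw [eval_sub, eval_X, eval_C, sub_neg_eq_add]
  congr 1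
  ext i j
  simp [Matrix.scalar, Matrix.one_apply, Matrix.diagonal, Matrix.smul_apply]

/-- Matrix determinant lemma, general form. -/
lemma det_add_vecMulVec {κ : Type*} [Fintype κ] [DecidableEq κ]
    (A : Matrix κ κ ℝ) (u v : κ → ℝ) :
    (A + vecMulVec u v).det = A.det + v ⬝ᵥ A.adjugate *ᵥ u := by
  have hdense : Dense {x : ℝ | IsUnit (x • (1 : Matrix κ κ ℝ) + A).det} := by
    have hfin : {x : ℝ | ¬ IsUnit (x • (1 : Matrix κ κ ℝ) + A).det}.Finite := by
      apply Set.Finite.subset (Polynomial.finite_setOf_isRoot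
        (p := ((-A).charpoly)) ((-A).charpoly_monic.ne_zero))
      intro x hx
      simp only [Set.mem_setOf_eq, isUnit_iff_ne_zero, not_not, det_smul_one_add] at hx ⊢
      exact hx
    have := hfin.countable.dense_compl ℝ
    convert this using 1
    ext x; simp
  have hcont1 : Continuous fun x : ℝ =>
      (x • (1 : Matrix κ κ ℝ) + A + vecMulVec u v).det := by
    apply Continuous.matrix_det
    fun_prop
  have hcont2 : Continuous fun x : ℝ =>
      (x • (1 : Matrix κ κ ℝ) + A).det + v ⬝ᵥ (x • (1 : Matrix κ κ ℝ) + A).adjugate *ᵥ u := by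
    apply Continuous.add
    · apply Continuous.matrix_det; fun_prop
    · apply Continuous.dotProduct continuous_const
      apply Continuous.matrix_mulVec _ continuous_const
      apply Continuous.matrix_adjugate; fun_prop
  have heq := hcont1.ext_on hdense hcont2 (fun x hx => by
    exact det_add_vecMulVec_of_isUnit _ hx u v)
  have := congrFun heq 0
  simpa using this

/-- `T_m^{ij}(S)`: the partial derivative of `T_m` with respect to the `(i,j)`-th matrix
entry, evaluated at `S`. -/
noncomputable def Tmij (n m : ℕ) (S : Matrix (Fin n) (Fin n) ℝ) (i j : Fin n) : ℝ :=
  deriv (fun t : ℝ => ptrace m (S + t • Matrix.single i j 1)) 0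

lemma ptrace_unfold {n : ℕ} (p : ℕ) (S : Matrix (Fin n) (Fin n) ℝ) :
    ptrace p S = ∑ t ∈ Finset.univ.powersetCard p,
      (S.submatrix (Subtype.val : {x // x ∈ t} → Fin n) Subtype.val).det := by
  unfold ptrace
  refine Finset.sum_congr rfl fun t _ => ?_
  congr!

lemma sum_dotProduct' {κ ι : Type*} [Fintype κ] [Fintype ι] (f : ι → κ → ℝ) (w : κ → ℝ) :
    (∑ j, f j) ⬝ᵥ w = ∑ j, f j ⬝ᵥ w := by
  simp only [dotProduct, Finset.sum_apply, Finset.sum_mul]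
  exact Finset.sum_comm

lemma dotProduct_sum' {κ ι : Type*} [Fintype κ] [Fintype ι] (w : κ → ℝ) (f : ι → κ → ℝ) :
    w ⬝ᵥ (∑ i, f i) = ∑ i, w ⬝ᵥ f i := by
  simp only [dotProduct, Finset.sum_apply, Finset.mul_sum]
  exact Finset.sum_comm

lemma mulVec_sum' {κ ι : Type*} [Fintype κ] [Fintype ι] (M : Matrix κ κ ℝ) (f : ι → κ → ℝ) :
    M *ᵥ (∑ i, f i) = ∑ i, M *ᵥ f i := by
  funext b
  simp only [mulVec, dotProduct, Finset.sum_apply, Finset.mul_sum]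
  exact Finset.sum_comm

/-- The coefficient of the quadratic form: cofactor entries summed over principal minors. -/
noncomputable def cf (n : ℕ) (S : Matrix (Fin n) (Fin n) ℝ) (t : Finset (Fin n))
    (i j : Fin n) : ℝ :=
  (fun b : {x // x ∈ t} => (Pi.single j 1 : Fin n → ℝ) (b : Fin n)) ⬝ᵥ
    ((S.submatrix (Subtype.val : {x // x ∈ t} → Fin n) Subtype.val).adjugate *ᵥ
      fun a : {x // x ∈ t} => (Pi.single i 1 : Fin n → ℝ) (a : Fin n))

lemma ptrace_add_vecMulVec {n : ℕ} (p : ℕ) (S : Matrix (Fin n) (Fin n) ℝ)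
    (u v : Fin n → ℝ) :
    ptrace p (S + vecMulVec u v) = ptrace p S + ∑ t ∈ Finset.univ.powersetCard p,
      (v ∘ (Subtype.val : {x // x ∈ t} → Fin n)) ⬝ᵥ
        ((S.submatrix (Subtype.val : {x // x ∈ t} → Fin n) Subtype.val).adjugate *ᵥ
          (u ∘ Subtype.val)) := by
  rw [ptrace_unfold, ptrace_unfold, ← Finset.sum_add_distrib]
  refine Finset.sum_congr rfl fun t _ => ?_
  have h : (S + vecMulVec u v).submatrix (Subtype.val : {x // x ∈ t} → Fin n)
        (Subtype.val : {x // x ∈ t} → Fin n)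
      = S.submatrix (Subtype.val : {x // x ∈ t} → Fin n) (Subtype.val : {x // x ∈ t} → Fin n)
        + vecMulVec (u ∘ (Subtype.val : {x // x ∈ t} → Fin n))
            (v ∘ (Subtype.val : {x // x ∈ t} → Fin n)) := rfl
  rw [h, det_add_vecMulVec]

lemma Tmij_eq (n m : ℕ) (S : Matrix (Fin n) (Fin n) ℝ) (i j : Fin n) :
    Tmij n m S i j = ∑ t ∈ Finset.univ.powersetCard m, cf n S t i j := by
  have key : ∀ s : ℝ, ptrace m (S + s • Matrix.single i j 1)
      = ptrace m S + s * ∑ t ∈ Finset.univ.powersetCard m, cf n S t i j := by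
    intro s
    have hstd : s • (Matrix.single i j (1:ℝ))
        = vecMulVec (Pi.single i s) (Pi.single j 1) := by
      ext a b
      by_cases ha : a = i <;> by_cases hb : b = j <;>
        simp [Matrix.single, vecMulVec, Pi.single_apply, ha, hb, Ne.symm, eq_comm]
    rw [hstd, ptrace_add_vecMulVec, Finset.mul_sum]
    congr 1
    refine Finset.sum_congr rfl fun t _ => ?_
    have hsingle : (Pi.single i s ∘ (Subtype.val : {x // x ∈ t} → Fin n))
        = s • fun a : {x // x ∈ t} => (Pi.single i 1 : Fin n → ℝ) (a : Fin n) := by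
      funext a
      simp [Pi.single_apply]
    rw [hsingle, mulVec_smul, dotProduct_smul]
    rfl
  have hfun : (fun s : ℝ => ptrace m (S + s • Matrix.single i j 1))
      = fun s => ptrace m S + s * ∑ t ∈ Finset.univ.powersetCard m, cf n S t i j :=
    funext key
  rw [Tmij, hfun]
  have h := (((hasDerivAt_id (0:ℝ)).mul_const
      (∑ t ∈ Finset.univ.powersetCard m, cf n S t i j)).const_add (ptrace m S)).deriv
  simpa using h

lemma cf_quadratic {n : ℕ} (S : Matrix (Fin n) (Fin n) ℝ) (t : Finset (Fin n))
    (ξ : Fin n → ℝ) :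
    ∑ i, ∑ j, cf n S t i j * ξ i * ξ j
      = (ξ ∘ (Subtype.val : {x // x ∈ t} → Fin n)) ⬝ᵥ
        ((S.submatrix (Subtype.val : {x // x ∈ t} → Fin n) Subtype.val).adjugate *ᵥ
          (ξ ∘ Subtype.val)) := by
  set M := (S.submatrix (Subtype.val : {x // x ∈ t} → Fin n) Subtype.val).adjugate with hM
  set f : Fin n → {x // x ∈ t} → ℝ :=
    fun j => fun b : {x // x ∈ t} => (Pi.single j 1 : Fin n → ℝ) (b : Fin n) with hf
  have h1 : ∀ i j, cf n S t i j * ξ i * ξ j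
      = (ξ j • f j) ⬝ᵥ (M *ᵥ (ξ i • f i)) := by
    intro i j
    rw [mulVec_smul, dotProduct_smul, smul_dotProduct]
    simp only [smul_eq_mul, cf, hM, hf]
    ring
  have hv : (∑ j, ξ j • f j) = ξ ∘ (Subtype.val : {x // x ∈ t} → Fin n) := by
    funext b
    simp [hf, Finset.sum_apply, Pi.single_apply]
  calc ∑ i, ∑ j, cf n S t i j * ξ i * ξ j
      = ∑ j, ∑ i, (ξ j • f j) ⬝ᵥ (M *ᵥ (ξ i • f i)) := by
        simp only [h1]
        exact Finset.sum_comm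
    _ = (∑ j, ξ j • f j) ⬝ᵥ (M *ᵥ (∑ i, ξ i • f i)) := by
        rw [mulVec_sum', sum_dotProduct']
        exact (Finset.sum_congr rfl fun j _ => (dotProduct_sum' _ _).symm)
    _ = (ξ ∘ Subtype.val) ⬝ᵥ (M *ᵥ (ξ ∘ Subtype.val)) := by rw [hv]

/-- For every real symmetric `n × n` matrix `S`, every `1 ≤ m ≤ n` and every
vector `ξ ∈ ℝⁿ`: `T_m(S + ξξᵀ) = T_m(S) + Σ_{i,j} T_m^{ij}(S) ξ_i ξ_j`. -/
theorem ptrace_add_rank_one (n m : ℕ) (h1 : 1 ≤ m) (h2 : m ≤ n)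
    (S : Matrix (Fin n) (Fin n) ℝ) (hS : S.IsSymm) (ξ : Fin n → ℝ) :
    ptrace m (S + Matrix.vecMulVec ξ ξ)
      = ptrace m S + ∑ i, ∑ j, Tmij n m S i j * ξ i * ξ j := by
  rw [ptrace_add_vecMulVec]
  congr 1
  symm
  simp only [Tmij_eq, Finset.sum_mul]
  have swap1 : ∀ i : Fin n, ∑ j, ∑ t ∈ Finset.univ.powersetCard m, cf n S t i j * ξ i * ξ j
      = ∑ t ∈ Finset.univ.powersetCard m, ∑ j, cf n S t i j * ξ i * ξ j :=
    fun i => Finset.sum_comm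
  simp only [swap1]
  rw [Finset.sum_comm]
  exact Finset.sum_congr rfl fun t _ => cf_quadratic S t ξ
end

section
/- Let n ≥ 1, R > 0, and x ∈ ℝⁿ with |x| > R, and set s = 2|x|² − R² (which is positive). Let K be the symmetric n×n matrix K = s^{−1/2}·(I − (2/s)·x xᵀ), where x xᵀ is the outer product matrix. Then for every 1 ≤ m ≤ n, T_m(K) = C(n−1, m−1)·s^{−m/2}·(n/m − 2|x|²/s), where C(n−1, m−1) is the binomial coefficient. -/
open Matrix

lemma det_one_sub_smul_vecMulVec {ι : Type*} [Fintype ι] [DecidableEq ι] (a : ℝ) (v : ι → ℝ) :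
    ((1 : Matrix ι ι ℝ) - a • Matrix.vecMulVec v v).det = 1 - a * ∑ i, v i ^ 2 := by
  have h : (1 : Matrix ι ι ℝ) - a • Matrix.vecMulVec v v
      = 1 + Matrix.replicateCol Unit (-(a • v)) * Matrix.replicateRow Unit v := by
    rw [vecMulVec_eq (ι := Unit)]
    ext i j
    simp [Matrix.mul_apply, Matrix.replicateCol, Matrix.replicateRow, Matrix.one_apply, sub_eq_add_neg, mul_assoc]
  rw [h, Matrix.det_one_add_replicateCol_mul_replicateRow]
  simp only [dotProduct, Pi.neg_apply, Pi.smul_apply, smul_eq_mul, Finset.mul_sum]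
  rw [sub_eq_add_neg, ← Finset.sum_neg_distrib]
  congr 1
  exact Finset.sum_congr rfl fun i _ => by ring

lemma card_filter_mem_powersetCard {ι : Type*} [Fintype ι] [DecidableEq ι] (m : ℕ)
    (hm : 1 ≤ m) (i : ι) :
    ((Finset.univ.powersetCard m).filter (fun t => i ∈ t)).card
      = (Fintype.card ι - 1).choose (m - 1) := by
  classical
  have := Finset.card_powersetCard (m - 1) ((Finset.univ : Finset ι).erase i)
  rw [Finset.card_erase_of_mem (Finset.mem_univ i), Finset.card_univ] at this
  rw [← this]
  refine Finset.card_bij' (fun t _ => t.erase i) (fun s _ => insert i s) ?_ ?_ ?_ ?_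
  · intro t ht
    simp only [Finset.mem_filter, Finset.mem_powersetCard] at ht
    obtain ⟨⟨_, hcard⟩, hi⟩ := ht
    rw [Finset.mem_powersetCard]
    constructor
    · intro j hj
      simp only [Finset.mem_erase] at hj ⊢
      exact ⟨hj.1, Finset.mem_univ j⟩
    · rw [Finset.card_erase_of_mem hi, hcard]
  · intro s hs
    rw [Finset.mem_powersetCard] at hs
    obtain ⟨hsub, hcard⟩ := hs
    have hi : i ∉ s := fun h => (Finset.mem_erase.1 (hsub h)).1 rfl
    simp only [Finset.mem_filter, Finset.mem_powersetCard]
    refine ⟨⟨Finset.subset_univ _, ?_⟩, Finset.mem_insert_self i s⟩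
    rw [Finset.card_insert_of_notMem hi, hcard]
    omega
  · intro t ht
    simp only [Finset.mem_filter] at ht
    exact Finset.insert_erase ht.2
  · intro s hs
    rw [Finset.mem_powersetCard] at hs
    have hi : i ∉ s := fun h => (Finset.mem_erase.1 (hs.1 h)).1 rfl
    exact Finset.erase_insert hi

lemma sum_powersetCard_sum {ι : Type*} [Fintype ι] [DecidableEq ι] (m : ℕ) (hm : 1 ≤ m)
    (f : ι → ℝ) :
    ∑ t ∈ Finset.univ.powersetCard m, ∑ i ∈ t, f i
      = ((Fintype.card ι - 1).choose (m - 1) : ℝ) * ∑ i, f i := by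
  classical
  have : ∀ t ∈ Finset.univ.powersetCard m, ∑ i ∈ t, f i
      = ∑ i : ι, if i ∈ t then f i else 0 := by
    intro t _
    rw [Finset.sum_ite_mem, Finset.univ_inter]
  rw [Finset.sum_congr rfl this, Finset.sum_comm]
  rw [Finset.mul_sum]
  refine Finset.sum_congr rfl fun i _ => ?_
  rw [← Finset.sum_filter, Finset.sum_const, ← card_filter_mem_powersetCard m hm i]
  simp [mul_comm]


/-- let `n ≥ 1`, `R > 0`, `x ∈ ℝⁿ` with `|x| > R`, and `s = 2|x|² − R² > 0`.
For `K = s^{-1/2} (I − (2/s) x xᵀ)` and every `1 ≤ m ≤ n`: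
`T_m(K) = C(n-1, m-1) s^{-m/2} (n/m − 2|x|²/s)`. -/
theorem ptrace_hyperboloid_curvature_matrix (n : ℕ) (hn : 1 ≤ n) (R : ℝ) (hR : 0 < R)
    (x : Fin n → ℝ) (hx : R ^ 2 < ∑ i, x i ^ 2)
    (m : ℕ) (h1 : 1 ≤ m) (h2 : m ≤ n) :
    ptrace m
        ((Real.sqrt (2 * ∑ i, x i ^ 2 - R ^ 2))⁻¹ •
          ((1 : Matrix (Fin n) (Fin n) ℝ)
            - (2 / (2 * ∑ i, x i ^ 2 - R ^ 2)) • Matrix.vecMulVec x x))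
      = (Nat.choose (n - 1) (m - 1) : ℝ)
          * ((Real.sqrt (2 * ∑ i, x i ^ 2 - R ^ 2))⁻¹) ^ m
          * ((n : ℝ) / m - 2 * (∑ i, x i ^ 2) / (2 * ∑ i, x i ^ 2 - R ^ 2)) := by
  classical
  set T : ℝ := ∑ i, x i ^ 2 with hT
  set s : ℝ := 2 * T - R ^ 2 with hs
  set c : ℝ := (Real.sqrt s)⁻¹ with hc
  have hm0 : (m : ℝ) ≠ 0 := Nat.cast_ne_zero.2 (by omega)
  have key : n.choose m * m = (n - 1).choose (m - 1) * n := by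
    have h := Nat.add_one_mul_choose_eq (n - 1) (m - 1)
    have e1 : n - 1 + 1 = n := by omega
    have e2 : m - 1 + 1 = m := by omega
    rw [e1, e2] at h
    rw [← h, Nat.mul_comm]
  have hnm : (n.choose m : ℝ) * m = ((n - 1).choose (m - 1) : ℝ) * n := by
    exact_mod_cast key
  have hchoose : (n.choose m : ℝ) = ((n - 1).choose (m - 1) : ℝ) * n / m := by
    field_simp
    linarith [hnm]
  unfold ptrace
  have step : ∀ t ∈ (Finset.univ : Finset (Fin n)).powersetCard m,
      ((c • ((1 : Matrix (Fin n) (Fin n) ℝ) - (2 / s) • Matrix.vecMulVec x x)).submatrix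
        (Subtype.val : {y // y ∈ t} → Fin n) Subtype.val).det
      = c ^ m * (1 - (2 / s) * ∑ i ∈ t, x i ^ 2) := by
    intro t ht
    have hcard : t.card = m := (Finset.mem_powersetCard.1 ht).2
    have hsub : ((1 : Matrix (Fin n) (Fin n) ℝ) - (2 / s) • Matrix.vecMulVec x x).submatrix
        (Subtype.val : {y // y ∈ t} → Fin n) Subtype.val
        = (1 : Matrix {y // y ∈ t} {y // y ∈ t} ℝ) - (2 / s) • Matrix.vecMulVec (fun i : {y // y ∈ t} => x i.1) (fun i : {y // y ∈ t} => x i.1) := by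
      ext i j
      simp [Matrix.one_apply, Matrix.vecMulVec, Subtype.coe_inj]
    rw [Matrix.submatrix_smul]
    simp only [Pi.smul_apply]
    rw [hsub, Matrix.det_smul, det_one_sub_smul_vecMulVec]
    have h1' : Fintype.card {y // y ∈ t} = m := by rw [Fintype.card_coe, hcard]
    have h2' : (∑ i : {y // y ∈ t}, x i ^ 2) = ∑ i ∈ t, x i ^ 2 := by
      rw [← Finset.sum_coe_sort t (fun i => x i ^ 2)]
    rw [h1', h2']
  have expand : ∑ t ∈ (Finset.univ : Finset (Fin n)).powersetCard m,
      c ^ m * (1 - (2 / s) * ∑ i ∈ t, x i ^ 2)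
      = c ^ m * ((((Finset.univ : Finset (Fin n)).powersetCard m).card : ℝ)
          - (2 / s) * ∑ t ∈ (Finset.univ : Finset (Fin n)).powersetCard m,
              ∑ i ∈ t, x i ^ 2) := by
    rw [← Finset.mul_sum, Finset.sum_sub_distrib, Finset.sum_const, ← Finset.mul_sum]
    simp
  have total : ∑ t ∈ (Finset.univ : Finset (Fin n)).powersetCard m,
      c ^ m * (1 - (2 / s) * ∑ i ∈ t, x i ^ 2)
      = ((n - 1).choose (m - 1) : ℝ) * c ^ m * ((n : ℝ) / m - 2 * T / s) := by
    rw [expand, sum_powersetCard_sum m h1, Finset.card_powersetCard, Finset.card_univ,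
      Fintype.card_fin, ← hT, hchoose]
    ring
  refine Eq.trans (Finset.sum_congr rfl fun t ht => ?_) total
  convert step t ht using 2
end
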